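/- A suffix item [β] is inserted in U_j (by the variant algorithm) if and only if at least one dotted item [A → α • β] is inserted in E_{i,j} (by the Earley algorithm) for some A, α, and i. -/

import Mathlib

/-! Formalization of Earley parsing and the Nederhof–Satta variant. -/

variable {T N : Type}

/-- A context-free grammar: a start nonterminal and a set of productions. -/
structure CFG (T N : Type) where
  initial : N
  rules : Set (N × List (Symbol T N))

/-- One rewriting step of the grammar. -/
def CFG.Produces (g : CFG T N) (u v : List (Symbol T N)) : Prop :=
  ∃ A α p q, (A, α) ∈ g.rules ∧ u = p ++ [Symbol.nonterminal A] ++ q ∧ v = p ++ α ++ q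

/-- The derivation relation ⇒* (reflexive-transitive closure of rewriting). -/
def CFG.Derives (g : CFG T N) : List (Symbol T N) → List (Symbol T N) → Prop :=
  Relation.ReflTransGen g.Produces

/-- The language of the grammar: { w | S ⇒* w }. -/
def CFG.language (g : CFG T N) : Set (List T) :=
  { w | g.Derives [Symbol.nonterminal g.initial] (w.map Symbol.terminal) }

/-- `inputSlice w i j` is the substring a_{i+1}⋯a_j of `w` (0-based: w[i..j)), as symbols. -/
def inputSlice (w : List T) (i j : ℕ) : List (Symbol T N) :=
  ((w.take j).drop i).map Symbol.terminal

/-- The least Earley table: `Earley g w A α β i j` means the dotted item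
[A → α • β] is inserted in E_{i,j}. -/
inductive Earley (g : CFG T N) (w : List T) :
    N → List (Symbol T N) → List (Symbol T N) → ℕ → ℕ → Prop where
  | init {α} : (g.initial, α) ∈ g.rules → Earley g w g.initial [] α 0 0
  | predict {B α A β i j γ} : Earley g w B α (Symbol.nonterminal A :: β) i j →
      (A, γ) ∈ g.rules → Earley g w A [] γ j j
  | scan {A α a β i j} : Earley g w A α (Symbol.terminal a :: β) i j →
      w[j]? = some a → Earley g w A (α ++ [Symbol.terminal a]) β i (j + 1)
  | complete {A α B β i k γ j} : Earley g w A α (Symbol.nonterminal B :: β) i k →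
      Earley g w B γ [] k j → (B, γ) ∈ g.rules →
      Earley g w A (α ++ [Symbol.nonterminal B]) β i j

mutual
  /-- Forward part of the variant: `VarU g w β j` means suffix item [β] ∈ U_j. -/
  inductive VarU (g : CFG T N) (w : List T) : List (Symbol T N) → ℕ → Prop where
    | init {α} : (g.initial, α) ∈ g.rules → VarU g w α 0
    | predict {A β j γ} : VarU g w (Symbol.nonterminal A :: β) j →
        (A, γ) ∈ g.rules → VarU g w γ j
    | scan {a β j} : VarU g w (Symbol.terminal a :: β) j → w[j]? = some a →
        VarU g w β (j + 1)
    | complete {B β k γ j} : VarU g w (Symbol.nonterminal B :: β) k → (B, γ) ∈ g.rules →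
        VarT g w γ k j → VarU g w β j

  /-- Backward part of the variant: `VarT g w β j m` means suffix item [β] ∈ T_{j,m}. -/
  inductive VarT (g : CFG T N) (w : List T) : List (Symbol T N) → ℕ → ℕ → Prop where
    | empty {m} : VarU g w [] m → VarT g w [] m m
    | scan {a β j m} : VarU g w (Symbol.terminal a :: β) j → w[j]? = some a →
        VarT g w β (j + 1) m → VarT g w (Symbol.terminal a :: β) j m
    | complete {B β k γ j m} : VarU g w (Symbol.nonterminal B :: β) k → (B, γ) ∈ g.rules →
        VarT g w γ k j → VarT g w β j m → VarT g w (Symbol.nonterminal B :: β) k m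
end

/-- Joint soundness of Earley w.r.t. the variant. -/
lemma earley_to_var {g : CFG T N} {w : List T} {A α β i j}
    (h : Earley g w A α β i j) :
    VarU g w β j ∧ ∀ m, VarT g w β j m → VarT g w (α ++ β) i m := by
  induction h with
  | init hr => exact ⟨VarU.init hr, fun m hm => hm⟩
  | predict h hr ih => exact ⟨VarU.predict ih.1 hr, fun m hm => hm⟩
  | scan h ha ih =>
    refine ⟨VarU.scan ih.1 ha, fun m hm => ?_⟩
    have := ih.2 m (VarT.scan ih.1 ha hm)
    simpa [List.append_assoc] using this
  | complete h1 h2 hr ih1 ih2 =>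
    have hγ : VarT g w _ _ _ := ih2.2 _ (VarT.empty ih2.1)
    rw [List.append_nil] at hγ
    refine ⟨VarU.complete ih1.1 hr hγ, fun m hm => ?_⟩
    have := ih1.2 m (VarT.complete ih1.1 hr hγ hm)
    simpa [List.append_assoc] using this

/-- Motive for the forward part. -/
def MU (g : CFG T N) (w : List T) (β : List (Symbol T N)) (j : ℕ) : Prop :=
  ∃ A α i, Earley g w A α β i j

/-- Motive for the backward part. -/
def MT (g : CFG T N) (w : List T) (β : List (Symbol T N)) (j m : ℕ) : Prop :=
  ∀ A α i, Earley g w A α β i j → Earley g w A (α ++ β) [] i m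

lemma case_pred {g : CFG T N} {w : List T} {A β j γ}
    (hr : (A, γ) ∈ g.rules) (ih : MU g w (Symbol.nonterminal A :: β) j) :
    MU g w γ j := by
  obtain ⟨A', α, i, hE⟩ := ih
  exact ⟨_, _, _, Earley.predict hE hr⟩

lemma case_scan {g : CFG T N} {w : List T} {a β j}
    (ha : w[j]? = some a) (ih : MU g w (Symbol.terminal a :: β) j) :
    MU g w β (j + 1) := by
  obtain ⟨A, α, i, hE⟩ := ih
  exact ⟨_, _, _, Earley.scan hE ha⟩

lemma case_comp {g : CFG T N} {w : List T} {B β k γ j}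
    (hr : (B, γ) ∈ g.rules) (ih : MU g w (Symbol.nonterminal B :: β) k)
    (iht : MT g w γ k j) : MU g w β j := by
  obtain ⟨A, α, i, hE⟩ := ih
  have hB := iht _ [] _ (Earley.predict hE hr)
  rw [List.nil_append] at hB
  exact ⟨_, _, _, Earley.complete hE hB hr⟩

lemma case_tempty {g : CFG T N} {w : List T} {m : ℕ} : MT g w [] m m := by
  intro A α i hE; simpa using hE

lemma case_tscan {g : CFG T N} {w : List T} {a β j m}
    (ha : w[j]? = some a) (ih : MT g w β (j + 1) m) :
    MT g w (Symbol.terminal a :: β) j m := by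
  intro A α i hE
  have := ih A (α ++ [Symbol.terminal a]) i (Earley.scan hE ha)
  simpa [List.append_assoc] using this

lemma case_tcomp {g : CFG T N} {w : List T} {B β k γ j m}
    (hr : (B, γ) ∈ g.rules) (ihγ : MT g w γ k j) (ihβ : MT g w β j m) :
    MT g w (Symbol.nonterminal B :: β) k m := by
  intro A α i hE
  have hB := ihγ _ [] _ (Earley.predict hE hr)
  rw [List.nil_append] at hB
  have := ihβ A (α ++ [Symbol.nonterminal B]) i (Earley.complete hE hB hr)
  simpa [List.append_assoc] using this

/-- Joint completeness of Earley w.r.t. the variant. -/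
lemma var_to_earley {g : CFG T N} {w : List T} :
    (∀ β j, VarU g w β j → MU g w β j) ∧
    (∀ β j m, VarT g w β j m → MT g w β j m) :=
  ⟨fun _ _ h => VarU.rec (motive_1 := fun β j _ => MU g w β j)
      (motive_2 := fun β j m _ => MT g w β j m)
      (fun hr => ⟨_, _, _, Earley.init hr⟩)
      (fun _ hr ih => case_pred hr ih)
      (fun _ ha ih => case_scan ha ih)
      (fun _ hr _ ih iht => case_comp hr ih iht)
      (fun _ _ => case_tempty)
      (fun _ ha _ _ ih => case_tscan ha ih)
      (fun _ hr _ _ _ ihγ ihβ => case_tcomp hr ihγ ihβ) h,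
   fun _ _ _ h => VarT.rec (motive_1 := fun β j _ => MU g w β j)
      (motive_2 := fun β j m _ => MT g w β j m)
      (fun hr => ⟨_, _, _, Earley.init hr⟩)
      (fun _ hr ih => case_pred hr ih)
      (fun _ ha ih => case_scan ha ih)
      (fun _ hr _ ih iht => case_comp hr ih iht)
      (fun _ _ => case_tempty)
      (fun _ ha _ _ ih => case_tscan ha ih)
      (fun _ hr _ _ _ ihγ ihβ => case_tcomp hr ihγ ihβ) h⟩

/-- [β] ∈ U_j iff [A → α • β] ∈ E_{i,j} for some A, α, i. -/
theorem variant_U_iff_earley (g : CFG T N) (w : List T)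
    (β : List (Symbol T N)) (j : ℕ) :
    VarU g w β j ↔ ∃ A α i, Earley g w A α β i j := by
  constructor
  · exact fun h => var_to_earley.1 _ _ h
  · rintro ⟨A, α, i, hE⟩
    exact (earley_to_var hE).1
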